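/- Let 𝓡 be right amenable, let ℱ be a right Følner net in 𝓡, let M be infinite, let X be a non-empty subshift of Q^M, let Y be a strongly irreducible subshift of Q^M, and let Δ be a local map from X to Y that is not surjective. Then Ent_ℱ(Δ(X)) < Ent_ℱ(Y). -/

import Mathlib

open Filter Set

namespace GoE

variable {G M Q : Type*}

/-- A left homogeneous space `⟨M, G, ▷⟩` together with a coordinate system
`⟨m₀, (g_{m₀,m})_{m∈M}⟩`: a cell space with finite stabiliser `G₀` of `m₀`. -/
structure CellSpace (G M : Type*) [Group G] where
  act : G → M → M
  one_act : ∀ m : M, act 1 m = m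
  mul_act : ∀ (g h : G) (m : M), act (g * h) m = act g (act h m)
  transitive : ∀ m m' : M, ∃ g : G, act g m = m'
  m0 : M
  coord : M → G
  coord_act : ∀ m : M, act (coord m) m0 = m
  stab_finite : {g : G | act g m0 = m0}.Finite

variable [Group G]

namespace CellSpace

/-- Membership in the stabiliser `G₀` of `m₀`. -/
def stab (R : CellSpace G M) (g : G) : Prop := R.act g R.m0 = R.m0

/-- The induced right semi-action `m ↝ gG₀ = g_{m₀,m} g ▷ m₀`, on representatives. -/
def sAct (R : CellSpace G M) (m : M) (g : G) : M := R.act (R.coord m * g) R.m0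

/-- `m ↝ ι n` where `ι : M → G/G₀`, `n ↦ G_{m₀,n}` is the canonical identification. -/
def nAct (R : CellSpace G M) (m n : M) : M := R.act (R.coord m * R.coord n) R.m0

/-- `S ⊆ G` represents a finite symmetric right generating set of cosets
(`G₀ · S ⊆ S`, `S⁻¹ ⊆ S`, and `S` generates). -/
structure IsRightGenSet (R : CellSpace G M) (S : Set G) : Prop where
  finite : S.Finite
  saturated : ∀ s ∈ S, ∀ g₀ : G, R.stab g₀ → s * g₀ ∈ S
  stab_mul : ∀ g₀ : G, R.stab g₀ → ∀ s ∈ S, g₀ * s ∈ S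
  symm : ∀ s ∈ S, s⁻¹ ∈ S
  generates : ∀ m : M, ∃ (k : ℕ) (f : ℕ → M), f 0 = R.m0 ∧ f k = m ∧
    ∀ i < k, ∃ s ∈ S, f (i + 1) = R.sAct (f i) s

/-- There is an `S`-path of length `n` from `m` to `m'` in the `S`-Cayley graph. -/
def Chain (R : CellSpace G M) (S : Set G) (m m' : M) (n : ℕ) : Prop :=
  ∃ f : ℕ → M, f 0 = m ∧ f n = m' ∧ ∀ i < n, ∃ s ∈ S, f (i + 1) = R.sAct (f i) s

/-- The `S`-metric `d`. -/
noncomputable def dist (R : CellSpace G M) (S : Set G) (m m' : M) : ℕ :=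
  sInf {n : ℕ | R.Chain S m m' n}

/-- The ball `B(m, ρ)` of radius `ρ` centred at `m`. -/
noncomputable def ball (R : CellSpace G M) (S : Set G) (m : M) (ρ : ℕ) : Set M :=
  {m' : M | R.dist S m m' ≤ ρ}

/-- The `θ`-interior `A^{-θ}` of `A`. -/
noncomputable def inter (R : CellSpace G M) (S : Set G) (A : Set M) (θ : ℕ) : Set M :=
  {m ∈ A | R.ball S m θ ⊆ A}

/-- The `θ`-closure `A^{+θ}` of `A`. -/
noncomputable def clos (R : CellSpace G M) (S : Set G) (A : Set M) (θ : ℕ) : Set M :=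
  {m : M | (R.ball S m θ ∩ A).Nonempty}

/-- The external `θ`-boundary `∂θ⁺A = A^{+θ} ∖ A`. -/
noncomputable def extB (R : CellSpace G M) (S : Set G) (A : Set M) (θ : ℕ) : Set M :=
  R.clos S A θ \ A

/-- The internal `θ`-boundary `∂θ⁻A = A ∖ A^{-θ}`. -/
noncomputable def intB (R : CellSpace G M) (S : Set G) (A : Set M) (θ : ℕ) : Set M :=
  A \ R.inter S A θ

/-- The `θ`-boundary `∂θA = A^{+θ} ∖ A^{-θ}`. -/
noncomputable def bdry (R : CellSpace G M) (S : Set G) (A : Set M) (θ : ℕ) : Set M :=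
  R.clos S A θ \ R.inter S A θ

end CellSpace

/-- The set `X_A` of restrictions to `A` of the elements of `X`. -/
def restr (A : Set M) (X : Set (M → Q)) : Set (A → Q) :=
  (fun x : M → Q => A.restrict x) '' X

/-- The pattern `p` (with domain `A`) semi-occurs in the configuration `c`:
there is `h ∈ H` with `h ⊛ p = c↾_{h ▷ dom p}`. -/
def SemiOccurs (R : CellSpace G M) (H : Subgroup G) {A : Set M} (p : A → Q)
    (c : M → Q) : Prop :=
  ∃ h ∈ H, ∀ a : A, c (R.act h ↑a) = p a

/-- The pattern `p` (with domain `A`) occurs at `t` in the configuration `c`: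
`t ⊛' p = c↾_{t ↝ A}`. -/
def OccursAt (R : CellSpace G M) {A : Set M} (p : A → Q) (t : M) (c : M → Q) : Prop :=
  ∀ a : A, c (R.nAct t ↑a) = p a

/-- The pattern `p` is allowed in `X`: it semi-occurs in some point of `X`. -/
def Allowed (R : CellSpace G M) (H : Subgroup G) (X : Set (M → Q)) {A : Set M}
    (p : A → Q) : Prop :=
  ∃ x ∈ X, SemiOccurs R H p x

/-- The set `⟨𝔉⟩` generated by a set `𝔉` of forbidden patterns. -/
def Generated (R : CellSpace G M) (H : Subgroup G) (𝔉 : Set (Σ A : Set M, A → Q)) :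
    Set (M → Q) :=
  {c : M → Q | ∀ f ∈ 𝔉, ¬ SemiOccurs R H f.2 c}

/-- `X` is a subshift of `Q^M`: it is generated by a set of blocks. -/
def IsSubshift (R : CellSpace G M) (H : Subgroup G) (X : Set (M → Q)) : Prop :=
  ∃ 𝔉 : Set (Σ A : Set M, A → Q), (∀ f ∈ 𝔉, f.1.Finite) ∧ X = Generated R H 𝔉

/-- `X` is a subshift of finite type: it is generated by a finite set of blocks. -/
def IsSubshiftFT (R : CellSpace G M) (H : Subgroup G) (X : Set (M → Q)) : Prop :=
  ∃ 𝔉 : Set (Σ A : Set M, A → Q), 𝔉.Finite ∧ (∀ f ∈ 𝔉, f.1.Finite) ∧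
    X = Generated R H 𝔉

/-- `X` is a `κ`-step subshift: it is generated by a set of `B(κ)`-blocks. -/
def IsStep (R : CellSpace G M) (S : Set G) (H : Subgroup G) (X : Set (M → Q))
    (κ : ℕ) : Prop :=
  ∃ 𝔉 : Set (Σ A : Set M, A → Q), (∀ f ∈ 𝔉, f.1 = R.ball S R.m0 κ) ∧
    X = Generated R H 𝔉

/-- `X` is `κ`-strongly irreducible. -/
def IsStronglyIrr (R : CellSpace G M) (S : Set G) (H : Subgroup G)
    (X : Set (M → Q)) (κ : ℕ) : Prop :=
  ∀ (A B : Set M), A.Finite → B.Finite → ∀ (p : A → Q) (p' : B → Q),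
    Allowed R H X p → Allowed R H X p' →
    (∀ a ∈ A, ∀ b ∈ B, κ + 1 ≤ R.dist S a b) →
    ∃ x ∈ X, A.restrict x = p ∧ B.restrict x = p'

/-- `X` has `ρ`-bounded propagation. -/
def HasBoundedProp (R : CellSpace G M) (S : Set G) (X : Set (M → Q)) (ρ : ℕ) : Prop :=
  ∀ F : Set M, F.Finite → ∀ p : F → Q,
    (∀ f ∈ F, ∃ x ∈ X, ∀ (m : M) (hm : m ∈ R.ball S f ρ ∩ F), p ⟨m, hm.2⟩ = x m) →
    ∃ x ∈ X, F.restrict x = p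

/-- `Δ` is a `κ`-local map from `X` to `Y`. -/
def IsLocalMap (R : CellSpace G M) (S : Set G) (H : Subgroup G)
    (X Y : Set (M → Q)) (Δ : (M → Q) → (M → Q)) (κ : ℕ) : Prop :=
  Set.MapsTo Δ X Y ∧
  ∃ N : Set M, N ⊆ R.ball S R.m0 κ ∧
    (∀ g₀ : G, R.stab g₀ → ∀ n ∈ N, R.act g₀ n ∈ N) ∧
    ∃ δ : (N → Q) → Q,
      (∀ h₀ ∈ H, R.stab h₀ →
        ∀ ℓ ∈ restr N X, ∀ ℓ' : N → Q,
          (∀ (n : M) (hn : n ∈ N) (hn' : R.act h₀⁻¹ n ∈ N),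
            ℓ' ⟨n, hn⟩ = ℓ ⟨R.act h₀⁻¹ n, hn'⟩) →
          δ ℓ' = δ ℓ) ∧
      ∀ x ∈ X, ∀ m : M, Δ x m = δ (fun n : N => x (R.nAct m ↑n))

/-- `Δ` is pre-injective on `X`. -/
def PreInjective (X : Set (M → Q)) (Δ : (M → Q) → (M → Q)) : Prop :=
  ∀ x ∈ X, ∀ x' ∈ X, Δ x = Δ x' → {m : M | x m ≠ x' m}.Finite → x = x'

/-- The cell space `R` is right amenable: there is a finitely additive probability
measure on the power set of `M` that is semi-invariant under the right semi-action. -/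
def RightAmenable (R : CellSpace G M) : Prop :=
  ∃ μ : Set M → ℝ, (∀ A : Set M, 0 ≤ μ A) ∧ μ Set.univ = 1 ∧
    (∀ A B : Set M, Disjoint A B → μ (A ∪ B) = μ A + μ B) ∧
    ∀ (g : G) (A : Set M), Set.InjOn (fun m => R.sAct m g) A →
      μ ((fun m => R.sAct m g) '' A) = μ A

/-- `F` is a right Følner net in `R` (indexed by the directed set `I`). -/
def IsFolnerNet (R : CellSpace G M) (S : Set G) {I : Type*} [Preorder I]
    (F : I → Set M) : Prop :=
  (∀ i, (F i).Nonempty) ∧ (∀ i, (F i).Finite) ∧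
  ∀ ρ : ℕ, Tendsto (fun i => ((R.bdry S (F i) ρ).ncard : ℝ) / ((F i).ncard : ℝ))
    atTop (nhds 0)

/-- The entropy of `X ⊆ Q^M` with respect to the net `F`:
`limsup_i log|X_{F_i}| / |F_i|`. -/
noncomputable def entropy (R : CellSpace G M) (S : Set G) {I : Type*} [Preorder I]
    (F : I → Set M) (X : Set (M → Q)) : ℝ :=
  limsup (fun i => Real.log ((restr (F i) X).ncard : ℝ) / ((F i).ncard : ℝ)) atTop

/-- `T` is a `⟨θ, κ, θ'⟩`-tiling of `R`. -/
def IsTiling (R : CellSpace G M) (S : Set G) (θ κ θ' : ℕ) (T : Set M) : Prop :=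
  (∀ t ∈ T, ∀ t' ∈ T, t ≠ t' →
    ∀ a ∈ R.ball S t θ, ∀ b ∈ R.ball S t' θ, κ + 1 ≤ R.dist S a b) ∧
  ∀ m : M, ∃ t ∈ T, m ∈ R.ball S t θ'

/-- The action `h ⊛ c` of `h ∈ G` on configurations: `(h ⊛ c)(m) = c(h⁻¹ ▷ m)`. -/
def shiftAct (R : CellSpace G M) (h : G) (c : M → Q) : M → Q :=
  fun m => c (R.act h⁻¹ m)

/-! ### Auxiliary lemmas -/

section Aux

variable [Group G] (R : CellSpace G M) (S : Set G)

namespace CellSpace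

lemma act_inv_act (g : G) (m : M) : R.act g⁻¹ (R.act g m) = m := by
  rw [← R.mul_act, inv_mul_cancel, R.one_act]

lemma act_act_inv (g : G) (m : M) : R.act g (R.act g⁻¹ m) = m := by
  rw [← R.mul_act, mul_inv_cancel, R.one_act]

lemma stab_one : R.stab (1 : G) := R.one_act _

lemma stab_inv {g : G} (h : R.stab g) : R.stab g⁻¹ := by
  unfold stab at *
  conv_lhs => rw [← h]
  rw [R.act_inv_act]

lemma stab_mul'' {g g' : G} (h : R.stab g) (h' : R.stab g') : R.stab (g * g') := by
  unfold stab at *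
  rw [R.mul_act, h', h]

lemma act_injective (g : G) : Function.Injective (R.act g) := by
  intro a b hab
  have := congrArg (R.act g⁻¹) hab
  rwa [R.act_inv_act, R.act_inv_act] at this

lemma act_coord_inv (m : M) : R.act (R.coord m)⁻¹ m = R.m0 := by
  apply R.act_injective (R.coord m)
  rw [R.act_act_inv, R.coord_act]

/-- One step of the Cayley graph can be reversed. -/
lemma sAct_rev (hS : R.IsRightGenSet S) (m : M) {s : G} (hs : s ∈ S) :
    ∃ s' ∈ S, R.sAct (R.sAct m s) s' = m := by
  set m' := R.sAct m s with hm'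
  have hstab : R.stab ((R.coord m * s)⁻¹ * R.coord m') := by
    unfold stab
    rw [R.mul_act, R.coord_act, hm']
    show R.act (R.coord m * s)⁻¹ (R.sAct m s) = R.m0
    unfold sAct
    rw [R.act_inv_act]
  refine ⟨((R.coord m * s)⁻¹ * R.coord m')⁻¹ * s⁻¹, ?_, ?_⟩
  · exact hS.stab_mul _ (R.stab_inv hstab) _ (hS.symm s hs)
  · show R.act (R.coord m' * (((R.coord m * s)⁻¹ * R.coord m')⁻¹ * s⁻¹)) R.m0 = m
    have : R.coord m' * (((R.coord m * s)⁻¹ * R.coord m')⁻¹ * s⁻¹) = R.coord m := by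
      group
    rw [this, R.coord_act]

/-- Left multiplication maps steps to steps. -/
lemma sAct_act (hS : R.IsRightGenSet S) (g : G) (m : M) {s : G} (hs : s ∈ S) :
    ∃ s' ∈ S, R.act g (R.sAct m s) = R.sAct (R.act g m) s' := by
  set mb := R.act g m with hmb
  have hstab : R.stab ((R.coord mb)⁻¹ * g * R.coord m) := by
    unfold stab
    rw [R.mul_act, R.mul_act, R.coord_act, ← hmb, R.act_coord_inv]
  refine ⟨(R.coord mb)⁻¹ * g * R.coord m * s, hS.stab_mul _ hstab s hs, ?_⟩
  show R.act g (R.act (R.coord m * s) R.m0) = R.act (R.coord mb * ((R.coord mb)⁻¹ * g * R.coord m * s)) R.m0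
  rw [← R.mul_act]
  congr 1
  group

lemma chain_refl (m : M) : R.Chain S m m 0 :=
  ⟨fun _ => m, rfl, rfl, fun i hi => absurd hi (Nat.not_lt_zero i)⟩

lemma chain_step (hS : R.IsRightGenSet S) (m : M) {s : G} (hs : s ∈ S) :
    R.Chain S m (R.sAct m s) 1 := by
  refine ⟨fun i => if i = 0 then m else R.sAct m s, by simp, by simp, ?_⟩
  intro i hi
  interval_cases i
  exact ⟨s, hs, by simp⟩

lemma chain_concat {m m' m'' : M} {a b : ℕ} (h : R.Chain S m m' a)
    (h' : R.Chain S m' m'' b) : R.Chain S m m'' (a + b) := by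
  obtain ⟨f, hf0, hfa, hfs⟩ := h
  obtain ⟨g, hg0, hgb, hgs⟩ := h'
  refine ⟨fun i => if i ≤ a then f i else g (i - a), by simp [hf0], ?_, ?_⟩
  · by_cases hb : b = 0
    · subst hb; simp [hfa, ← hg0, ← hgb]
    · have : ¬ a + b ≤ a := by omega
      simp [this, hgb]
  · intro i hi
    by_cases hia : i + 1 ≤ a
    · obtain ⟨s, hs, hstep⟩ := hfs i (by omega)
      refine ⟨s, hs, ?_⟩
      have hia2 : i ≤ a := by omega
      simp [hia, hia2, hstep]
    · by_cases hia' : i ≤ a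
      · -- i = a
        have hieq : i = a := by omega
        obtain ⟨s, hs, hstep⟩ := hgs 0 (by omega)
        refine ⟨s, hs, ?_⟩
        simp only [hia, if_neg, hia', if_pos]
        rw [hieq]
        simp [hstep, hg0, hfa]
      · obtain ⟨s, hs, hstep⟩ := hgs (i - a) (by omega)
        refine ⟨s, hs, ?_⟩
        have h1 : ¬ i + 1 ≤ a := by omega
        have h2 : i + 1 - a = i - a + 1 := by omega
        simp [hia', h1, h2, hstep]

lemma chain_symm (hS : R.IsRightGenSet S) {m m' : M} {n : ℕ}
    (h : R.Chain S m m' n) : R.Chain S m' m n := by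
  induction n generalizing m' with
  | zero =>
    obtain ⟨f, hf0, hfn, -⟩ := h
    rw [← hfn, hf0]; exact R.chain_refl S m
  | succ n ih =>
    obtain ⟨f, hf0, hfn, hfs⟩ := h
    obtain ⟨s, hs, hstep⟩ := hfs n (by omega)
    have h1 : R.Chain S m (f n) n := ⟨f, hf0, rfl, fun i hi => hfs i (by omega)⟩
    obtain ⟨s', hs', hrev⟩ := R.sAct_rev S hS (f n) hs
    have hm' : m' = R.sAct (f n) s := by rw [← hfn, hstep]
    have h2 : R.Chain S m' (f n) 1 := by
      have h3 := R.chain_step S hS m' hs'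
      rw [hm'] at h3
      rw [hrev] at h3
      rw [← hm'] at h3
      exact h3
    have := R.chain_concat S h2 (ih h1)
    rwa [add_comm] at this

lemma chain_prefix {m m' : M} {n : ℕ} (h : R.Chain S m m' n) (k : ℕ) (hk : k ≤ n) :
    ∃ w : M, R.Chain S m w k ∧ R.Chain S w m' (n - k) := by
  obtain ⟨f, hf0, hfn, hfs⟩ := h
  refine ⟨f k, ⟨f, hf0, rfl, fun i hi => hfs i (by omega)⟩, ?_⟩
  refine ⟨fun i => f (k + i), by simp, ?_, ?_⟩
  · show f (k + (n - k)) = m'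
    have : k + (n - k) = n := by omega
    rw [this, hfn]
  · intro i hi
    obtain ⟨s, hs, hstep⟩ := hfs (k + i) (by omega)
    refine ⟨s, hs, ?_⟩
    show f (k + (i + 1)) = R.sAct (f (k + i)) s
    have : k + (i + 1) = k + i + 1 := by omega
    rw [this, hstep]

lemma exists_chain (hS : R.IsRightGenSet S) (m m' : M) : ∃ n, R.Chain S m m' n := by
  have key : ∀ x : M, ∃ n, R.Chain S R.m0 x n := by
    intro x
    obtain ⟨k, f, hf0, hfk, hfs⟩ := hS.generates x
    exact ⟨k, f, hf0, hfk, hfs⟩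
  obtain ⟨a, ha⟩ := key m
  obtain ⟨b, hb⟩ := key m'
  exact ⟨a + b, R.chain_concat S (R.chain_symm S hS ha) hb⟩

lemma chain_dist (hS : R.IsRightGenSet S) (m m' : M) :
    R.Chain S m m' (R.dist S m m') :=
  Nat.sInf_mem (R.exists_chain S hS m m')

lemma dist_le {m m' : M} {n : ℕ} (h : R.Chain S m m' n) : R.dist S m m' ≤ n :=
  Nat.sInf_le h

lemma dist_self (m : M) : R.dist S m m = 0 :=
  Nat.le_zero.mp (R.dist_le S (R.chain_refl S m))

lemma dist_triangle (hS : R.IsRightGenSet S) (m m' m'' : M) :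
    R.dist S m m'' ≤ R.dist S m m' + R.dist S m' m'' :=
  R.dist_le S (R.chain_concat S (R.chain_dist S hS m m') (R.chain_dist S hS m' m''))

lemma dist_comm (hS : R.IsRightGenSet S) (m m' : M) :
    R.dist S m m' = R.dist S m' m := by
  have h1 : ∀ a b : M, R.dist S a b ≤ R.dist S b a := fun a b =>
    R.dist_le S (R.chain_symm S hS (R.chain_dist S hS b a))
  exact le_antisymm (h1 m m') (h1 m' m)

lemma mem_ball {m m' : M} {ρ : ℕ} : m' ∈ R.ball S m ρ ↔ R.dist S m m' ≤ ρ := Iff.rfl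

lemma self_mem_ball (m : M) (ρ : ℕ) : m ∈ R.ball S m ρ := by
  rw [R.mem_ball, R.dist_self]; exact Nat.zero_le ρ

lemma ball_mono (m : M) {ρ ρ' : ℕ} (h : ρ ≤ ρ') : R.ball S m ρ ⊆ R.ball S m ρ' :=
  fun _ hx => le_trans hx h

lemma exists_between (hS : R.IsRightGenSet S) {t m : M} {a b : ℕ}
    (h : R.dist S t m ≤ a + b) : ∃ m', R.dist S t m' ≤ a ∧ R.dist S m' m ≤ b := by
  set n := R.dist S t m with hn
  by_cases hna : n ≤ a
  · exact ⟨m, hna, by rw [R.dist_self]; exact Nat.zero_le b⟩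
  · obtain ⟨w, hw1, hw2⟩ := R.chain_prefix S (R.chain_dist S hS t m) a (by omega)
    exact ⟨w, R.dist_le S hw1, le_trans (R.dist_le S hw2) (by omega)⟩

lemma ball_finite (hS : R.IsRightGenSet S) (m : M) (ρ : ℕ) :
    (R.ball S m ρ).Finite := by
  induction ρ with
  | zero =>
    apply Set.Finite.subset (Set.finite_singleton m)
    intro x hx
    rw [R.mem_ball, Nat.le_zero] at hx
    obtain ⟨f, hf0, hfn, -⟩ : R.Chain S m x 0 := hx ▸ R.chain_dist S hS m x
    simp [← hfn, hf0]
  | succ ρ ih =>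
    have hfin : (R.ball S m ρ ∪ ⋃ m' ∈ R.ball S m ρ, (fun s => R.sAct m' s) '' S).Finite :=
      Set.Finite.union ih (Set.Finite.biUnion ih
        (fun m' _ => Set.Finite.image (fun s => R.sAct m' s) hS.finite))
    apply Set.Finite.subset hfin
    intro x hx
    rw [R.mem_ball] at hx
    set n := R.dist S m x with hn
    by_cases hnρ : n ≤ ρ
    · exact Or.inl hnρ
    · have hne : n = ρ + 1 := by omega
      have hch := R.chain_dist S hS m x
      rw [← hn] at hch
      obtain ⟨f, hf0, hfn, hfs⟩ := hch
      obtain ⟨s, hs, hstep⟩ := hfs ρ (by omega)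
      right
      have hmem : f ρ ∈ R.ball S m ρ :=
        R.dist_le S ⟨f, hf0, rfl, fun i hi => hfs i (by omega)⟩
      refine Set.mem_biUnion hmem ⟨s, hs, ?_⟩
      show R.sAct (f ρ) s = x
      rw [← hstep, ← hne, hfn]

lemma chain_act (hS : R.IsRightGenSet S) (g : G) {m m' : M} {n : ℕ}
    (h : R.Chain S m m' n) : R.Chain S (R.act g m) (R.act g m') n := by
  induction n generalizing m' with
  | zero =>
    obtain ⟨f, hf0, hfn, -⟩ := h
    rw [← hfn, hf0]; exact R.chain_refl S _
  | succ n ih =>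
    obtain ⟨f, hf0, hfn, hfs⟩ := h
    obtain ⟨s, hs, hstep⟩ := hfs n (by omega)
    have h1 := ih ⟨f, hf0, rfl, fun i hi => hfs i (by omega)⟩
    obtain ⟨s', hs', hact⟩ := R.sAct_act S hS g (f n) hs
    have h2 : R.Chain S (R.act g (f n)) (R.act g m') 1 := by
      have := R.chain_step S hS (R.act g (f n)) hs'
      rwa [← hact, ← hstep, hfn] at this
    exact R.chain_concat S h1 h2

lemma dist_act (hS : R.IsRightGenSet S) (g : G) (m m' : M) :
    R.dist S (R.act g m) (R.act g m') = R.dist S m m' := by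
  have h1 : ∀ (g : G) (a b : M), R.dist S (R.act g a) (R.act g b) ≤ R.dist S a b :=
    fun g a b => R.dist_le S (R.chain_act S hS g (R.chain_dist S hS a b))
  refine le_antisymm (h1 g m m') ?_
  have := h1 g⁻¹ (R.act g m) (R.act g m')
  rwa [R.act_inv_act, R.act_inv_act] at this

lemma ball_act (hS : R.IsRightGenSet S) (g : G) (m : M) (ρ : ℕ) :
    R.act g '' R.ball S m ρ = R.ball S (R.act g m) ρ := by
  ext x
  constructor
  · rintro ⟨a, ha, rfl⟩
    rw [R.mem_ball] at ha ⊢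
    rwa [R.dist_act S hS]
  · intro hx
    refine ⟨R.act g⁻¹ x, ?_, R.act_act_inv g x⟩
    rw [R.mem_ball] at hx ⊢
    rw [← R.dist_act S hS g, R.act_act_inv]
    exact hx

lemma ball_ncard (hS : R.IsRightGenSet S) (m : M) (ρ : ℕ) :
    (R.ball S m ρ).ncard = (R.ball S R.m0 ρ).ncard := by
  have : R.ball S m ρ = R.act (R.coord m) '' R.ball S R.m0 ρ := by
    rw [R.ball_act S hS, R.coord_act]
  rw [this, Set.ncard_image_of_injective _ (R.act_injective _)]

end CellSpace

end Aux
section Aux2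

variable [Group G] (R : CellSpace G M) (S : Set G) (H : Subgroup G)

lemma shiftAct_mem_generated {𝔉 : Set (Σ A : Set M, A → Q)} {c : M → Q}
    (hc : c ∈ Generated R H 𝔉) {h : G} (hh : h ∈ H) :
    shiftAct R h c ∈ Generated R H 𝔉 := by
  intro f hf hocc
  apply hc f hf
  obtain ⟨h', hh', he⟩ := hocc
  refine ⟨h⁻¹ * h', mul_mem (inv_mem hh) hh', fun a => ?_⟩
  have := he a
  unfold shiftAct at this
  rwa [R.mul_act]

lemma shiftAct_mem_subshift {X : Set (M → Q)} (hX : IsSubshift R H X) {x : M → Q}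
    (hx : x ∈ X) {h : G} (hh : h ∈ H) : shiftAct R h x ∈ X := by
  obtain ⟨𝔉, -, rfl⟩ := hX
  exact shiftAct_mem_generated R H hx hh

lemma localMap_equivariant {X Y : Set (M → Q)} (hH : ∀ m : M, R.coord m ∈ H)
    (hX : IsSubshift R H X) {Δ : (M → Q) → (M → Q)} {κ : ℕ}
    (hloc : IsLocalMap R S H X Y Δ κ) {h : G} (hh : h ∈ H) {x : M → Q} (hx : x ∈ X) :
    Δ (shiftAct R h x) = shiftAct R h (Δ x) := by
  obtain ⟨hmaps, N, hNball, hNstab, δ, hδinv, hδ⟩ := hloc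
  funext m
  set m' := R.act h⁻¹ m with hm'def
  have hg0 : R.stab ((R.coord m)⁻¹ * h * R.coord m') := by
    unfold CellSpace.stab
    rw [R.mul_act, R.mul_act, R.coord_act, hm'def, R.act_act_inv, R.act_coord_inv]
  set g₀ : G := (R.coord m)⁻¹ * h * R.coord m' with hg0def
  have hg0H : g₀ ∈ H := mul_mem (mul_mem (inv_mem (hH m)) hh) (hH m')
  set x' : M → Q := fun a => x (R.act (h⁻¹ * R.coord m) a) with hx'def
  have hx'X : x' ∈ X := by
    have : x' = shiftAct R ((R.coord m)⁻¹ * h) x := by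
      funext a
      unfold shiftAct
      rw [mul_inv_rev, inv_inv]
    rw [this]
    exact shiftAct_mem_subshift R H hX hx (mul_mem (inv_mem (hH m)) hh)
  have hL : Δ (shiftAct R h x) m = δ (N.restrict x') := by
    rw [hδ _ (shiftAct_mem_subshift R H hX hx hh) m]
    congr 1
    funext n
    show x (R.act h⁻¹ (R.act (R.coord m * R.coord ↑n) R.m0)) = x (R.act (h⁻¹ * R.coord m) ↑n)
    conv_rhs => rw [← R.coord_act (↑n : M)]
    rw [← R.mul_act, ← R.mul_act, mul_assoc]
  have hR : shiftAct R h (Δ x) m = δ (fun n : N => x' (R.act g₀ ↑n)) := by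
    show Δ x m' = _
    rw [hδ _ hx m']
    congr 1
    funext n
    show x (R.act (R.coord m' * R.coord ↑n) R.m0) = x (R.act (h⁻¹ * R.coord m) (R.act g₀ ↑n))
    conv_rhs => rw [← R.coord_act (↑n : M)]
    rw [← R.mul_act, ← R.mul_act]
    congr 2
    rw [hg0def]
    group
  rw [hL, hR]
  refine (hδinv g₀⁻¹ (inv_mem hg0H) (R.stab_inv hg0)
    (N.restrict x') ⟨x', hx'X, rfl⟩ (fun n : N => x' (R.act g₀ ↑n)) ?_).symm
  intro n hn hn'
  show x' (R.act g₀ n) = x' (R.act g₀⁻¹⁻¹ n)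
  rw [inv_inv]

lemma exists_net (hS : R.IsRightGenSet S) (D : ℕ) (hD : 1 ≤ D) :
    ∃ T : Set M, (∀ t ∈ T, ∀ t' ∈ T, t ≠ t' → D ≤ R.dist S t t') ∧
      (∀ m : M, ∃ t ∈ T, R.dist S t m < D) := by
  have hchains : ∀ c ⊆ {T : Set M | ∀ t ∈ T, ∀ t' ∈ T, t ≠ t' → D ≤ R.dist S t t'},
      IsChain (· ⊆ ·) c → ∃ ub ∈ {T : Set M | ∀ t ∈ T, ∀ t' ∈ T, t ≠ t' → D ≤ R.dist S t t'},
        ∀ s ∈ c, s ⊆ ub := by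
    intro c hc hchain
    refine ⟨⋃₀ c, ?_, fun s hs => Set.subset_sUnion_of_mem hs⟩
    rintro t ⟨A, hA, htA⟩ t' ⟨B, hB, ht'B⟩ hne
    rcases hchain.total hA hB with hAB | hBA
    · exact hc hB t (hAB htA) t' ht'B hne
    · exact hc hA t htA t' (hBA ht'B) hne
  obtain ⟨T, hT⟩ := zorn_subset
    {T : Set M | ∀ t ∈ T, ∀ t' ∈ T, t ≠ t' → D ≤ R.dist S t t'} hchains
  refine ⟨T, hT.prop, ?_⟩
  intro m
  by_contra hcov
  push_neg at hcov
  have hmT : m ∉ T := by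
    intro hmem
    have := hcov m hmem
    rw [R.dist_self] at this
    omega
  have hins : insert m T ∈ {T : Set M | ∀ t ∈ T, ∀ t' ∈ T, t ≠ t' → D ≤ R.dist S t t'} := by
    rintro t (rfl | htT) t' (rfl | ht'T) hne
    · exact absurd rfl hne
    · rw [R.dist_comm S hS]
      exact hcov t' ht'T
    · exact hcov t htT
    · exact hT.prop t htT t' ht'T hne
  have heq := hT.eq_of_subset hins (Set.subset_insert m T)
  exact hmT (heq ▸ Set.mem_insert m T)

end Aux2
section Aux3

variable [Group G] (R : CellSpace G M) (S : Set G) (H : Subgroup G)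

lemma exists_finite_witness [Finite Q] (hS : R.IsRightGenSet S)
    {X Y : Set (M → Q)} (hX : IsSubshift R H X) {Δ : (M → Q) → (M → Q)} {κ : ℕ}
    (hloc : IsLocalMap R S H X Y Δ κ) {y : M → Q} (hy : y ∉ Δ '' X) :
    ∃ θ : ℕ, ∀ z ∈ Δ '' X, ∃ a ∈ R.ball S R.m0 θ, z a ≠ y a := by
  classical
  letI : TopologicalSpace Q := ⊥
  haveI : DiscreteTopology Q := ⟨rfl⟩
  -- `X` is closed
  have hXclosed : IsClosed X := by
    obtain ⟨𝔉, h𝔉, rfl⟩ := hX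
    have hgen : Generated R H 𝔉 = ⋂ f ∈ 𝔉, {c : M → Q | SemiOccurs R H f.2 c}ᶜ := by
      ext c
      simp [Generated]
    rw [hgen]
    refine isClosed_biInter fun f hf => ?_
    rw [isClosed_compl_iff]
    have : {c : M → Q | SemiOccurs R H f.2 c} =
        ⋃ h ∈ (H : Set G), ⋂ a : f.1, {c : M → Q | c (R.act h ↑a) = f.2 a} := by
      ext c
      simp [SemiOccurs]
    rw [this]
    refine isOpen_biUnion fun h hh => ?_
    haveI : Finite f.1 := (h𝔉 f hf).to_subtype
    refine isOpen_iInter_of_finite fun a => ?_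
    show IsOpen ((fun c : M → Q => c (R.act h ↑a)) ⁻¹' {f.2 a})
    exact IsOpen.preimage (continuous_apply (R.act h ↑a)) (isOpen_discrete _)
  obtain ⟨hmaps, N, hNball, hNstab, δ, hδinv, hδ⟩ := hloc
  haveI : Finite N := ((R.ball_finite S hS R.m0 κ).subset hNball).to_subtype
  set Δ' : (M → Q) → (M → Q) := fun x => fun m => δ (fun n : N => x (R.nAct m ↑n)) with hΔ'
  have hcont : Continuous Δ' := by
    refine continuous_pi fun m => ?_
    exact (continuous_of_discreteTopology (f := δ)).comp
      (continuous_pi fun n : N => continuous_apply (R.nAct m ↑n))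
  have himg : Δ '' X = Δ' '' X := by
    apply Set.image_congr
    intro x hx
    funext m
    exact hδ x hx m
  have hZcompact : IsCompact (Δ '' X) := by
    rw [himg]
    exact (hXclosed.isCompact).image hcont
  have hZclosed : IsClosed (Δ '' X) := hZcompact.isClosed
  -- extract a finite witness set
  have hA : ∃ A : Finset M, ∀ z ∈ Δ '' X, ∃ a ∈ A, z a ≠ y a := by
    by_contra hcon
    push_neg at hcon
    set K : Finset M → Set (M → Q) := fun A => (Δ '' X) ∩ {z | ∀ a ∈ A, z a = y a} with hK
    have hKne : ∀ A, (K A).Nonempty := by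
      intro A
      obtain ⟨z, hz, hza⟩ := hcon A
      exact ⟨z, hz, hza⟩
    have hKclosed : ∀ A, IsClosed (K A) := by
      intro A
      have hset : {z : M → Q | ∀ a ∈ A, z a = y a} = ⋂ a ∈ (A : Finset M), {z : M → Q | z a = y a} := by
        ext z
        simp
      rw [hK]
      refine hZclosed.inter ?_
      rw [hset]
      refine isClosed_biInter fun a _ => ?_
      show IsClosed ((fun z : M → Q => z a) ⁻¹' {y a})
      exact IsClosed.preimage (continuous_apply a) isClosed_singleton
    have hKcompact : ∀ A, IsCompact (K A) :=
      fun A => hZcompact.of_isClosed_subset (hKclosed A) Set.inter_subset_left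
    have hdir : Directed (· ⊇ ·) K := by
      intro A B
      refine ⟨A ∪ B, fun z hz => ⟨hz.1, fun a ha => hz.2 a ?_⟩,
        fun z hz => ⟨hz.1, fun a ha => hz.2 a ?_⟩⟩
      · exact Finset.mem_union_left B ha
      · exact Finset.mem_union_right A ha
    obtain ⟨z, hz⟩ := IsCompact.nonempty_iInter_of_directed_nonempty_isCompact_isClosed
      K hdir hKne hKcompact hKclosed
    have hzy : z = y := by
      funext m
      exact (Set.mem_iInter.mp hz {m}).2 m (Finset.mem_singleton_self m)
    exact hy (hzy ▸ (Set.mem_iInter.mp hz ∅).1)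
  obtain ⟨A, hA⟩ := hA
  refine ⟨A.sup (R.dist S R.m0), fun z hz => ?_⟩
  obtain ⟨a, haA, hane⟩ := hA z hz
  exact ⟨a, Finset.le_sup (f := R.dist S R.m0) haA, hane⟩

end Aux3
section Aux4

variable [Group G] (R : CellSpace G M) (S : Set G) (H : Subgroup G)

/-- The set of `F`-patterns of `Y` that "avoid" the translated pattern of `y`
at every tile of `T'`. -/
def AvSet [Group G] (R : CellSpace G M) (S : Set G) (Y : Set (M → Q)) (y : M → Q)
    (θ : ℕ) (F : Set M) (T' : Set M) : Set (↥F → Q) :=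
  {q : ↥F → Q | q ∈ restr F Y ∧ ∀ t' ∈ T', ∃ a, ∃ _ha : a ∈ R.ball S t' θ,
    ∃ haF : a ∈ F, q ⟨a, haF⟩ ≠ y (R.act (R.coord t')⁻¹ a)}

lemma counting_step [Finite Q] [Nonempty Q] (hS : R.IsRightGenSet S)
    {Y : Set (M → Q)} {κ θ : ℕ} (hYsi : IsStronglyIrr R S H Y κ)
    (y : M → Q) {F : Set M} (hF : F.Finite) {t : M} (T'' : Set M) (htT : t ∉ T'')
    (h1 : R.ball S t (θ + κ) ⊆ F)
    (h2 : ∀ t' ∈ T'', ∀ a ∈ R.ball S t' θ, a ∉ R.ball S t (θ + κ))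
    (h3 : shiftAct R (R.coord t) y ∈ Y) :
    (Nat.card Q ^ (R.ball S R.m0 (θ + κ)).ncard + 1) *
      (AvSet R S Y y θ F (insert t T'')).ncard ≤
    (Nat.card Q ^ (R.ball S R.m0 (θ + κ)).ncard) *
      (AvSet R S Y y θ F T'').ncard := by
  classical
  haveI : Finite ↥F := hF.to_subtype
  set D : ℕ := Nat.card Q ^ (R.ball S R.m0 (θ + κ)).ncard with hD
  set Ains : Set (↥F → Q) := AvSet R S Y y θ F (insert t T'') with hAins
  set A'' : Set (↥F → Q) := AvSet R S Y y θ F T'' with hA''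
  -- the gluing construction
  have hchoice : ∀ q : ↥F → Q, q ∈ Ains → ∃ w, w ∈ Y ∧
      (∀ (a : M) (haF : a ∈ F), a ∉ R.ball S t (θ + κ) → w a = q ⟨a, haF⟩) ∧
      (∀ a ∈ R.ball S t θ, w a = y (R.act (R.coord t)⁻¹ a)) := by
    rintro q ⟨⟨x, hxY, hxq⟩, -⟩
    have hsep : ∀ a ∈ F \ R.ball S t (θ + κ), ∀ b ∈ R.ball S t θ,
        κ + 1 ≤ R.dist S a b := by
      intro a ha b hb
      have h5 : R.dist S t a ≤ R.dist S t b + R.dist S b a := R.dist_triangle S hS t b a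
      have h6 : R.dist S a b = R.dist S b a := R.dist_comm S hS a b
      have h7 : ¬ R.dist S t a ≤ θ + κ := ha.2
      have h8 : R.dist S t b ≤ θ := hb
      omega
    obtain ⟨w, hwY, hw1, hw2⟩ := hYsi (F \ R.ball S t (θ + κ)) (R.ball S t θ)
      (hF.subset Set.diff_subset) (R.ball_finite S hS t θ)
      ((F \ R.ball S t (θ + κ)).restrict x)
      ((R.ball S t θ).restrict (shiftAct R (R.coord t) y))
      ⟨x, hxY, 1, one_mem H, fun a => by rw [R.one_act]; rfl⟩
      ⟨shiftAct R (R.coord t) y, h3, 1, one_mem H, fun a => by rw [R.one_act]; rfl⟩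
      hsep
    refine ⟨w, hwY, ?_, ?_⟩
    · intro a haF hnot
      have e1 : w a = x a := congrFun hw1 ⟨a, haF, hnot⟩
      have e2 : x a = q ⟨a, haF⟩ := congrFun hxq ⟨a, haF⟩
      rw [e1, e2]
    · intro a hab
      exact congrFun hw2 ⟨a, hab⟩
  choose w hwY hw1 hw2 using hchoice
  set φ : (↥F → Q) → (↥F → Q) :=
    fun q => if hq : q ∈ Ains then F.restrict (w q hq) else q with hφ
  have hφval : ∀ (q : ↥F → Q) (hq : q ∈ Ains), φ q = F.restrict (w q hq) := by
    intro q hq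
    simp only [hφ, dif_pos hq]
  -- the image lands in the "equal at t" set
  set B : Set (↥F → Q) := {q : ↥F → Q | q ∈ restr F Y ∧
      (∀ t' ∈ T'', ∃ a, ∃ _ha : a ∈ R.ball S t' θ, ∃ haF : a ∈ F,
        q ⟨a, haF⟩ ≠ y (R.act (R.coord t')⁻¹ a)) ∧
      (∀ (a : M) (ha : a ∈ R.ball S t θ) (haF : a ∈ F),
        q ⟨a, haF⟩ = y (R.act (R.coord t)⁻¹ a))} with hB
  have hφB : ∀ q ∈ Ains, φ q ∈ B := by
    intro q hq
    rw [hφval q hq]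
    refine ⟨⟨w q hq, hwY q hq, rfl⟩, ?_, ?_⟩
    · intro t' ht'
      obtain ⟨a, ha, haF, hne⟩ := hq.2 t' (Set.mem_insert_of_mem t ht')
      refine ⟨a, ha, haF, ?_⟩
      have : F.restrict (w q hq) ⟨a, haF⟩ = q ⟨a, haF⟩ :=
        hw1 q hq a haF (h2 t' ht' a ha)
      rw [this]
      exact hne
    · intro a ha haF
      exact hw2 q hq a ha
  -- disjointness and inclusion
  have hdisj : Disjoint Ains B := by
    rw [Set.disjoint_left]
    rintro q hq ⟨-, -, heq⟩
    obtain ⟨a, ha, haF, hne⟩ := hq.2 t (Set.mem_insert t T'')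
    exact hne (heq a ha haF)
  have hBsub : B ⊆ A'' := fun q hq => ⟨hq.1, hq.2.1⟩
  have hAsub : Ains ⊆ A'' := fun q hq =>
    ⟨hq.1, fun t' ht' => hq.2 t' (Set.mem_insert_of_mem t ht')⟩
  -- fiber counting
  set sA : Finset (↥F → Q) := (Set.toFinite Ains).toFinset with hsA
  have hkey : sA.card ≤ D * (sA.image φ).card := by
    refine Finset.card_le_mul_card_image sA D ?_
    intro b hb
    letI := Fintype.ofFinite (↥(R.ball S t (θ + κ) ∩ F) → Q)
    have hcard1 : (sA.filter (fun q => φ q = b)).card ≤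
        Fintype.card (↥(R.ball S t (θ + κ) ∩ F) → Q) := by
      refine Finset.card_le_card_of_injOn
        (fun q (a : ↥(R.ball S t (θ + κ) ∩ F)) => q ⟨a.1, a.2.2⟩)
        (fun _ _ => Finset.mem_univ _) ?_
      intro q1 hq1 q2 hq2 he
      simp only [Finset.coe_filter, Set.mem_setOf_eq, hsA, Set.Finite.mem_toFinset] at hq1 hq2
      funext a
      obtain ⟨a, haF⟩ := a
      by_cases hab : a ∈ R.ball S t (θ + κ)
      · exact congrFun he ⟨a, ⟨hab, haF⟩⟩
      · have e1 : q1 ⟨a, haF⟩ = φ q1 ⟨a, haF⟩ := by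
          rw [hφval q1 hq1.1]
          exact (hw1 q1 hq1.1 a haF hab).symm
        have e2 : q2 ⟨a, haF⟩ = φ q2 ⟨a, haF⟩ := by
          rw [hφval q2 hq2.1]
          exact (hw1 q2 hq2.1 a haF hab).symm
        rw [e1, e2, hq1.2, hq2.2]
    refine le_trans hcard1 ?_
    rw [← Nat.card_eq_fintype_card, Nat.card_fun, Nat.card_coe_set_eq, hD]
    refine Nat.pow_le_pow_right Nat.card_pos ?_
    calc (R.ball S t (θ + κ) ∩ F).ncard
        ≤ (R.ball S t (θ + κ)).ncard :=
          Set.ncard_le_ncard Set.inter_subset_left (R.ball_finite S hS t (θ + κ))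
      _ = (R.ball S R.m0 (θ + κ)).ncard := R.ball_ncard S hS t (θ + κ)
  -- put the counts together
  have hAcard : Ains.ncard = sA.card := Set.ncard_eq_toFinset_card Ains (Set.toFinite Ains)
  have himgB : ((sA.image φ : Finset (↥F → Q)) : Set (↥F → Q)) ⊆ B := by
    intro b hb
    rw [Finset.coe_image] at hb
    obtain ⟨q, hq, rfl⟩ := hb
    rw [hsA, Set.Finite.coe_toFinset] at hq
    exact hφB q hq
  have himgcard : (sA.image φ).card ≤ B.ncard := by
    rw [← Set.ncard_coe_finset]
    exact Set.ncard_le_ncard himgB (Set.toFinite B)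
  have hsum : Ains.ncard + B.ncard ≤ A''.ncard := by
    rw [← Set.ncard_union_eq hdisj (Set.toFinite _) (Set.toFinite _)]
    exact Set.ncard_le_ncard (Set.union_subset hAsub hBsub) (Set.toFinite _)
  have hkey2 : Ains.ncard ≤ D * B.ncard := by
    rw [hAcard]
    exact le_trans hkey (Nat.mul_le_mul_left D himgcard)
  have : (D + 1) * Ains.ncard = D * Ains.ncard + Ains.ncard := by ring
  rw [this]
  calc D * Ains.ncard + Ains.ncard ≤ D * Ains.ncard + D * B.ncard := by omega
    _ = D * (Ains.ncard + B.ncard) := by ring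
    _ ≤ D * A''.ncard := Nat.mul_le_mul_left D hsum

end Aux4

section Aux5

variable [Group G] (R : CellSpace G M) (S : Set G) (H : Subgroup G)

lemma counting [Finite Q] [Nonempty Q] (hS : R.IsRightGenSet S)
    {Y : Set (M → Q)} {κ θ : ℕ} (hYsi : IsStronglyIrr R S H Y κ)
    (y : M → Q) {F : Set M} (hF : F.Finite) {T' : Set M} (hT' : T'.Finite)
    (h1 : ∀ t ∈ T', R.ball S t (θ + κ) ⊆ F)
    (h2 : ∀ t ∈ T', ∀ t' ∈ T', t ≠ t' → ∀ a ∈ R.ball S t' θ, a ∉ R.ball S t (θ + κ))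
    (h3 : ∀ t ∈ T', shiftAct R (R.coord t) y ∈ Y) :
    (Nat.card Q ^ (R.ball S R.m0 (θ + κ)).ncard + 1) ^ T'.ncard *
      (AvSet R S Y y θ F T').ncard ≤
    (Nat.card Q ^ (R.ball S R.m0 (θ + κ)).ncard) ^ T'.ncard * (restr F Y).ncard := by
  classical
  revert h1 h2 h3
  refine Set.Finite.induction_on (motive := fun T' _ =>
    (∀ t ∈ T', R.ball S t (θ + κ) ⊆ F) →
    (∀ t ∈ T', ∀ t' ∈ T', t ≠ t' → ∀ a ∈ R.ball S t' θ, a ∉ R.ball S t (θ + κ)) →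
    (∀ t ∈ T', shiftAct R (R.coord t) y ∈ Y) →
    (Nat.card Q ^ (R.ball S R.m0 (θ + κ)).ncard + 1) ^ T'.ncard *
      (AvSet R S Y y θ F T').ncard ≤
    (Nat.card Q ^ (R.ball S R.m0 (θ + κ)).ncard) ^ T'.ncard * (restr F Y).ncard)
    T' hT' ?_ ?_
  · intro h1 h2 h3
    have : AvSet R S Y y θ F (∅ : Set M) = restr F Y := by
      ext q
      simp [AvSet]
    rw [this]
    simp
  · intro t T'' htT hT''fin ih h1 h2 h3
    set D : ℕ := Nat.card Q ^ (R.ball S R.m0 (θ + κ)).ncard with hD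
    have hstep := counting_step R S H hS hYsi y hF T'' htT
      (h1 t (Set.mem_insert t T''))
      (fun t' ht' a ha => h2 t (Set.mem_insert t T'') t' (Set.mem_insert_of_mem t ht')
        (fun he => htT (he ▸ ht')) a ha)
      (h3 t (Set.mem_insert t T''))
    have hih := ih (fun t' ht' => h1 t' (Set.mem_insert_of_mem t ht'))
      (fun ta hta tb htb hne a ha => h2 ta (Set.mem_insert_of_mem t hta)
        tb (Set.mem_insert_of_mem t htb) hne a ha)
      (fun t' ht' => h3 t' (Set.mem_insert_of_mem t ht'))
    rw [Set.ncard_insert_of_notMem htT hT''fin]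
    calc (D + 1) ^ (T''.ncard + 1) * (AvSet R S Y y θ F (insert t T'')).ncard
        = (D + 1) ^ T''.ncard * ((D + 1) * (AvSet R S Y y θ F (insert t T'')).ncard) := by
          ring
      _ ≤ (D + 1) ^ T''.ncard * (D * (AvSet R S Y y θ F T'').ncard) :=
          Nat.mul_le_mul_left _ hstep
      _ = D * ((D + 1) ^ T''.ncard * (AvSet R S Y y θ F T'').ncard) := by ring
      _ ≤ D * (D ^ T''.ncard * (restr F Y).ncard) := Nat.mul_le_mul_left D hih
      _ = D ^ (T''.ncard + 1) * (restr F Y).ncard := by ring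

end Aux5
section Aux6

variable [Group G] (R : CellSpace G M) (S : Set G)

lemma ncard_biUnion_le' {T' : Set M} (hT' : T'.Finite) (f : M → Set M) (β : ℕ)
    (hβ : ∀ t, (f t).ncard ≤ β) : (⋃ t ∈ T', f t).ncard ≤ T'.ncard * β := by
  classical
  induction T', hT' using Set.Finite.induction_on with
  | empty => simp
  | insert htT hfin ih =>
    rename_i a s
    rw [Set.biUnion_insert, Set.ncard_insert_of_notMem htT hfin]
    calc (f a ∪ ⋃ t ∈ s, f t).ncard ≤ (f a).ncard + (⋃ t ∈ s, f t).ncard :=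
          Set.ncard_union_le _ _
      _ ≤ β + s.ncard * β := Nat.add_le_add (hβ a) ih
      _ = (s.ncard + 1) * β := by ring

end Aux6
theorem stmt13 {I : Type*} [Nonempty I] [SemilatticeSup I]
    [Finite Q] (R : CellSpace G M) (S : Set G) (hS : R.IsRightGenSet S)
    (H : Subgroup G) (hH : ∀ m : M, R.coord m ∈ H)
    (hAm : RightAmenable R) (F : I → Set M) (hF : IsFolnerNet R S F)
    (hM : Infinite M)
    (X : Set (M → Q)) (hX : IsSubshift R H X) (hXne : X.Nonempty)
    (Y : Set (M → Q)) (hY : IsSubshift R H Y)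
    (hYsi : ∃ κ : ℕ, IsStronglyIrr R S H Y κ)
    (Δ : (M → Q) → (M → Q)) (hΔ : ∃ κ : ℕ, IsLocalMap R S H X Y Δ κ)
    (hns : Δ '' X ≠ Y) :
    entropy R S F (Δ '' X) < entropy R S F Y := by
  classical
  obtain ⟨κ, hYsi⟩ := hYsi
  obtain ⟨κΔ, hloc⟩ := hΔ
  set Z : Set (M → Q) := Δ '' X with hZdef
  have hZY : Z ⊆ Y := Set.MapsTo.image_subset hloc.1
  have hZne : Z.Nonempty := hXne.image Δ
  have hYne : Y.Nonempty := hZne.mono hZY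
  haveI hQne : Nonempty Q := by
    obtain ⟨x, -⟩ := hXne
    exact ⟨x (Classical.arbitrary M)⟩
  obtain ⟨y, hyY, hyZ⟩ : ∃ y ∈ Y, y ∉ Z := by
    by_contra hcon
    push_neg at hcon
    exact hns (Set.Subset.antisymm hZY hcon)
  obtain ⟨θ, hθ⟩ := exists_finite_witness R S H hS hX hloc hyZ
  have hZinv : ∀ z ∈ Z, ∀ h ∈ H, shiftAct R h z ∈ Z := by
    rintro _ ⟨x, hx, rfl⟩ h hh
    exact ⟨shiftAct R h x, shiftAct_mem_subshift R H hX hx hh,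
      localMap_equivariant R S H hH hX hloc hh hx⟩
  have havoid : ∀ z ∈ Z, ∀ t : M, ∃ a ∈ R.ball S t θ,
      z a ≠ y (R.act (R.coord t)⁻¹ a) := by
    intro z hz t
    have hz' : shiftAct R (R.coord t)⁻¹ z ∈ Z := hZinv z hz _ (inv_mem (hH t))
    obtain ⟨a, ha, hne⟩ := hθ _ hz'
    refine ⟨R.act (R.coord t) a, ?_, ?_⟩
    · have h5 := R.dist_act S hS (R.coord t) R.m0 a
      rw [R.coord_act] at h5
      show R.dist S t (R.act (R.coord t) a) ≤ θ
      rw [h5]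
      exact ha
    · rw [R.act_inv_act]
      simpa [shiftAct, inv_inv] using hne
  obtain ⟨T, hTsep, hTcov⟩ := exists_net R S hS (2 * θ + κ + 1) (by omega)
  have hTdisj : ∀ t ∈ T, ∀ t' ∈ T, t ≠ t' → ∀ a ∈ R.ball S t' θ,
      a ∉ R.ball S t (θ + κ) := by
    intro t ht t' ht' hne a ha hab
    have h5 : R.dist S t t' ≤ R.dist S t a + R.dist S a t' := R.dist_triangle S hS t a t'
    have h6 : R.dist S a t' = R.dist S t' a := R.dist_comm S hS a t'
    have h7 : R.dist S t' a ≤ θ := ha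
    have h8 : R.dist S t a ≤ θ + κ := hab
    have h9 : 2 * θ + κ + 1 ≤ R.dist S t t' := hTsep t ht t' ht' hne
    omega
  set βD : ℕ := (R.ball S R.m0 (θ + κ)).ncard with hβD
  set β' : ℕ := (R.ball S R.m0 (2 * θ + κ)).ncard with hβ'
  set D : ℕ := Nat.card Q ^ βD with hD
  have hD1 : 1 ≤ D := Nat.one_le_pow βD (Nat.card Q) Nat.card_pos
  have hDpos : (0:ℝ) < (D:ℝ) := by exact_mod_cast Nat.lt_of_lt_of_le Nat.zero_lt_one hD1
  have hβ'pos : 0 < β' :=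
    (Set.ncard_pos (R.ball_finite S hS R.m0 _)).mpr ⟨R.m0, R.self_mem_ball S R.m0 _⟩
  set c₀ : ℝ := Real.log (D + 1) - Real.log D with hc₀def
  have hc₀ : 0 < c₀ := sub_pos.mpr (Real.log_lt_log hDpos (lt_add_one _))
  set c : ℝ := c₀ / (2 * β') with hcdef
  have hc : 0 < c := div_pos hc₀ (by positivity)
  -- the eventual estimate
  have hmain : ∀ᶠ i in atTop,
      Real.log ((restr (F i) Z).ncard : ℝ) / ((F i).ncard : ℝ) ≤
      Real.log ((restr (F i) Y).ncard : ℝ) / ((F i).ncard : ℝ) - c := by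
    have hev := (hF.2.2 (3 * θ + 2 * κ)).eventually_lt_const (show (0:ℝ) < 1/2 by norm_num)
    filter_upwards [hev] with i hi
    set Fi := F i with hFidef
    have hFifin : Fi.Finite := hF.2.1 i
    have hFine : Fi.Nonempty := hF.1 i
    haveI : Finite ↥Fi := hFifin.to_subtype
    have hFipos : 0 < (Fi.ncard : ℝ) := by
      exact_mod_cast (Set.ncard_pos hFifin).mpr hFine
    set Ti : Set M := {t ∈ T | R.ball S t (θ + κ) ⊆ Fi} with hTidef
    have hTiF : Ti ⊆ Fi := fun t ht => ht.2 (R.self_mem_ball S t (θ + κ))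
    have hTifin : Ti.Finite := hFifin.subset hTiF
    set n : ℕ := Ti.ncard with hndef
    have hcount := counting R S H hS hYsi y hFifin hTifin
      (fun t ht => ht.2)
      (fun t ht t' ht' hne a ha => hTdisj t ht.1 t' ht'.1 hne a ha)
      (fun t ht => shiftAct_mem_subshift R H hY hyY (hH t))
    have hZsub : restr Fi Z ⊆ AvSet R S Y y θ Fi Ti := by
      rintro _ ⟨z, hz, rfl⟩
      refine ⟨⟨z, hZY hz, rfl⟩, ?_⟩
      intro t ht
      obtain ⟨a, ha, hne⟩ := havoid z hz t
      have haF : a ∈ Fi := ht.2 (R.ball_mono S t (Nat.le_add_right θ κ) ha)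
      exact ⟨a, ha, haF, hne⟩
    set zc : ℕ := (restr Fi Z).ncard with hzc
    set yc : ℕ := (restr Fi Y).ncard with hyc
    have hzc1 : 1 ≤ zc := by
      obtain ⟨z, hz⟩ := hZne
      exact (Set.ncard_pos (Set.toFinite _)).mpr ⟨Fi.restrict z, z, hz, rfl⟩
    have hyc1 : 1 ≤ yc := by
      obtain ⟨w, hw⟩ := hYne
      exact (Set.ncard_pos (Set.toFinite _)).mpr ⟨Fi.restrict w, w, hw, rfl⟩
    have hnat : (D + 1) ^ n * zc ≤ D ^ n * yc :=
      le_trans (Nat.mul_le_mul_left _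
        (Set.ncard_le_ncard hZsub (Set.toFinite _))) hcount
    have hreal : (n : ℝ) * Real.log ((D : ℝ) + 1) + Real.log (zc : ℝ) ≤
        (n : ℝ) * Real.log (D : ℝ) + Real.log (yc : ℝ) := by
      have hcast : ((D : ℝ) + 1) ^ n * (zc : ℝ) ≤ (D : ℝ) ^ n * (yc : ℝ) := by
        exact_mod_cast hnat
      have hzcpos : (0:ℝ) < (zc : ℝ) := by exact_mod_cast hzc1
      have hycpos : (0:ℝ) < (yc : ℝ) := by exact_mod_cast hyc1
      have hlog := Real.log_le_log (by positivity) hcast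
      rw [Real.log_mul (by positivity) (by positivity),
        Real.log_mul (by positivity) (by positivity),
        Real.log_pow, Real.log_pow] at hlog
      exact hlog
    have hcov2 : R.inter S Fi (3 * θ + 2 * κ) ⊆ ⋃ t ∈ Ti, R.ball S t (2 * θ + κ) := by
      intro m hm
      obtain ⟨t, ht, hdist⟩ := hTcov m
      have hdist' : R.dist S t m ≤ 2 * θ + κ := by omega
      have htTi : t ∈ Ti := by
        refine ⟨ht, fun a ha => hm.2 ?_⟩
        have h5 : R.dist S m a ≤ R.dist S m t + R.dist S t a := R.dist_triangle S hS m t a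
        have h6 : R.dist S m t = R.dist S t m := R.dist_comm S hS m t
        have h8 : R.dist S t a ≤ θ + κ := ha
        show R.dist S m a ≤ 3 * θ + 2 * κ
        omega
      exact Set.mem_biUnion htTi hdist'
    have hinterle : (R.inter S Fi (3 * θ + 2 * κ)).ncard ≤ n * β' := by
      refine le_trans (Set.ncard_le_ncard hcov2
        (hTifin.biUnion (fun t _ => R.ball_finite S hS t _))) ?_
      exact ncard_biUnion_le' hTifin _ β'
        (fun t => le_of_eq (R.ball_ncard S hS t _))
    have hclosfin : (R.clos S Fi (3 * θ + 2 * κ)).Finite := by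
      refine Set.Finite.subset (hFifin.biUnion
        (fun a (_ : a ∈ Fi) => R.ball_finite S hS a (3 * θ + 2 * κ))) ?_
      rintro m ⟨a, ha, haF⟩
      refine Set.mem_biUnion haF ?_
      show R.dist S a m ≤ 3 * θ + 2 * κ
      rw [← R.dist_comm S hS m a]
      exact ha
    have hFsplit : Fi.ncard ≤ (R.inter S Fi (3 * θ + 2 * κ)).ncard +
        (R.bdry S Fi (3 * θ + 2 * κ)).ncard := by
      refine le_trans (Set.ncard_le_ncard (t := R.inter S Fi (3 * θ + 2 * κ) ∪
        R.bdry S Fi (3 * θ + 2 * κ)) ?_ ?_) (Set.ncard_union_le _ _)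
      · intro m hm
        by_cases hint : m ∈ R.inter S Fi (3 * θ + 2 * κ)
        · exact Or.inl hint
        · exact Or.inr ⟨⟨m, ⟨R.self_mem_ball S m _, hm⟩⟩, hint⟩
      · exact Set.Finite.union (hFifin.subset (fun m hm => hm.1))
          (hclosfin.subset (fun m hm => hm.1))
    have hbdrysmall : 2 * (R.bdry S Fi (3 * θ + 2 * κ)).ncard < Fi.ncard := by
      have h2' := (div_lt_iff₀ hFipos).mp hi
      have h3' : (2:ℝ) * ((R.bdry S Fi (3 * θ + 2 * κ)).ncard : ℝ) < (Fi.ncard : ℝ) := by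
        linarith
      exact_mod_cast h3'
    have htiles : Fi.ncard ≤ 2 * (n * β') := by omega
    have hnc : (Fi.ncard : ℝ) * c ≤ (n : ℝ) * c₀ := by
      have hFr : (Fi.ncard : ℝ) ≤ 2 * ((n : ℝ) * (β' : ℝ)) := by exact_mod_cast htiles
      rw [hcdef, ← mul_div_assoc, div_le_iff₀ (by positivity : (0:ℝ) < 2 * (β' : ℝ))]
      nlinarith [hc₀.le]
    have hlogz : Real.log (zc : ℝ) ≤ Real.log (yc : ℝ) - (n : ℝ) * c₀ := by
      have hexp : (n : ℝ) * c₀ = (n : ℝ) * Real.log ((D : ℝ) + 1) -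
          (n : ℝ) * Real.log (D : ℝ) := by
        rw [hc₀def]; push_cast; ring
      linarith
    calc Real.log (zc : ℝ) / (Fi.ncard : ℝ)
        ≤ (Real.log (yc : ℝ) - (n : ℝ) * c₀) / (Fi.ncard : ℝ) :=
          (div_le_div_iff_of_pos_right hFipos).mpr hlogz
      _ = Real.log (yc : ℝ) / (Fi.ncard : ℝ) - ((n : ℝ) * c₀) / (Fi.ncard : ℝ) := by
          ring
      _ ≤ Real.log (yc : ℝ) / (Fi.ncard : ℝ) - c := by
          have : c ≤ ((n : ℝ) * c₀) / (Fi.ncard : ℝ) := by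
            rw [le_div_iff₀ hFipos]
            linarith [hnc]
          linarith
  -- entropy comparison
  set fZ : I → ℝ := fun i => Real.log ((restr (F i) Z).ncard : ℝ) / ((F i).ncard : ℝ)
    with hfZdef
  set fY : I → ℝ := fun i => Real.log ((restr (F i) Y).ncard : ℝ) / ((F i).ncard : ℝ)
    with hfYdef
  have hfYbdd : IsBoundedUnder (· ≤ ·) atTop fY := by
    refine ⟨Real.log (Nat.card Q), Filter.eventually_map.mpr (Filter.Eventually.of_forall
      (fun i => ?_))⟩
    have hFifin : (F i).Finite := hF.2.1 i
    have hFine : (F i).Nonempty := hF.1 i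
    haveI : Finite ↥(F i) := hFifin.to_subtype
    have hFipos : 0 < ((F i).ncard : ℝ) := by
      exact_mod_cast (Set.ncard_pos hFifin).mpr hFine
    have hyub : (restr (F i) Y).ncard ≤ Nat.card Q ^ (F i).ncard := by
      calc (restr (F i) Y).ncard ≤ (Set.univ : Set (↥(F i) → Q)).ncard :=
            Set.ncard_le_ncard (Set.subset_univ _) Set.finite_univ
        _ = Nat.card (↥(F i) → Q) := Set.ncard_univ _
        _ = Nat.card Q ^ Nat.card ↥(F i) := Nat.card_fun
        _ = Nat.card Q ^ (F i).ncard := by rw [Nat.card_coe_set_eq]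
    show Real.log ((restr (F i) Y).ncard : ℝ) / ((F i).ncard : ℝ) ≤ Real.log (Nat.card Q)
    rw [div_le_iff₀ hFipos]
    have hlog : Real.log ((restr (F i) Y).ncard : ℝ) ≤
        Real.log (((Nat.card Q : ℝ)) ^ (F i).ncard) := by
      have h1 : (0:ℝ) < ((restr (F i) Y).ncard : ℝ) := by
        obtain ⟨w, hw⟩ := hYne
        have hpos : 0 < (restr (F i) Y).ncard :=
          (Set.ncard_pos (Set.toFinite _)).mpr ⟨(F i).restrict w, w, hw, rfl⟩
        exact_mod_cast hpos
      refine Real.log_le_log h1 ?_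
      exact_mod_cast hyub
    rw [Real.log_pow] at hlog
    calc Real.log ((restr (F i) Y).ncard : ℝ)
        ≤ ((F i).ncard : ℝ) * Real.log (Nat.card Q) := hlog
      _ = Real.log (Nat.card Q) * ((F i).ncard : ℝ) := by ring
  have hfZ0 : ∀ i, 0 ≤ fZ i := by
    intro i
    have hFifin : (F i).Finite := hF.2.1 i
    haveI : Finite ↥(F i) := hFifin.to_subtype
    have h1 : (1:ℝ) ≤ ((restr (F i) Z).ncard : ℝ) := by
      obtain ⟨z, hz⟩ := hZne
      have hpos : 0 < (restr (F i) Z).ncard :=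
        (Set.ncard_pos (Set.toFinite _)).mpr ⟨(F i).restrict z, z, hz, rfl⟩
      exact_mod_cast hpos
    exact div_nonneg (Real.log_nonneg h1) (Nat.cast_nonneg _)
  have hcobdd : IsCoboundedUnder (· ≤ ·) atTop fZ :=
    isCoboundedUnder_le_of_eventually_le atTop (Filter.Eventually.of_forall hfZ0)
  have h2 : ∀ᶠ i in atTop, fY i < limsup fY atTop + c / 2 :=
    eventually_lt_of_limsup_lt (lt_add_of_pos_right _ (by positivity)) hfYbdd
  have hZle : limsup fZ atTop ≤ limsup fY atTop - c / 2 := by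
    refine limsup_le_of_le hcobdd ?_
    filter_upwards [hmain, h2] with i h1' h2'
    have : fZ i ≤ fY i - c := h1'
    linarith
  show limsup fZ atTop < limsup fY atTop
  have : limsup fY atTop - c / 2 < limsup fY atTop := by linarith
  exact lt_of_le_of_lt hZle this

end GoE
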